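/- Let (𝒱, J) be an essentially small site and let (ℬ, F) be a base for 𝒱, i.e. ℬ is an essentially small category and F : ℬ → 𝒱 is a faithful functor satisfying property (⋆). Then the assignment sending each object B of ℬ to the collection of those sieves S on B whose pushforward sieve along F (the smallest sieve on F(B) containing F(s) for every morphism s belonging to S) is a J-covering sieve of F(B), defines a Grothendieck topology on ℬ (called the F-induced topology). -/

import Mathlib

open CategoryTheory

universe u

/-- Property (⋆) of Beilinson for families of pairs indexed by `Fin n`:
for every object `X` of `V` and every finite family of pairs `(Bo α, f α)` with
`f α : X ⟶ F.obj (Bo α)`, there exist objects `B' β` of `B` and morphisms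
`g β : F.obj (B' β) ⟶ X` generating a `J`-covering sieve of `X`, such that every
composite `g β ≫ f α` is the image under `F` of a morphism `B' β ⟶ Bo α`. -/
def StarPropertyOn {B V : Type u} [SmallCategory B] [SmallCategory V]
    (F : B ⥤ V) (J : GrothendieckTopology V) (n : ℕ) : Prop :=
  ∀ (X : V) (Bo : Fin n → B) (f : ∀ α, X ⟶ F.obj (Bo α)),
    ∃ (ι : Type u) (B' : ι → B) (g : ∀ β, F.obj (B' β) ⟶ X),
      Sieve.ofArrows (fun β => F.obj (B' β)) g ∈ J X ∧
      ∀ (α : Fin n) (β : ι), ∃ h : B' β ⟶ Bo α, F.map h = g β ≫ f α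

/-- Property (⋆): the above for all finite families. -/
def StarProperty {B V : Type u} [SmallCategory B] [SmallCategory V]
    (F : B ⥤ V) (J : GrothendieckTopology V) : Prop :=
  ∀ n : ℕ, StarPropertyOn F J n

/-- If `(B, F)` is a base for the site `(V, J)` (i.e. `F` is faithful and satisfies
property (⋆)), then declaring a sieve `S` on `B` to be covering when its pushforward
along `F` is `J`-covering defines a Grothendieck topology on `B`. -/
theorem induced_topology_exists {B V : Type u} [SmallCategory B] [SmallCategory V]
    (J : GrothendieckTopology V) (F : B ⥤ V) [F.Faithful]
    (hF : StarProperty F J) :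
    ∃ K : GrothendieckTopology B,
      ∀ (X : B) (S : Sieve X), S ∈ K X ↔ S.functorPushforward F ∈ J (F.obj X) := by
  refine ⟨{
    sieves := fun X S => S.functorPushforward F ∈ J (F.obj X)
    top_mem' := fun X => by
      have h : (⊤ : Sieve X).functorPushforward F = ⊤ := by
        rw [← Sieve.id_mem_iff_eq_top]
        exact ⟨X, 𝟙 X, 𝟙 _, trivial, by simp⟩
      show (⊤ : Sieve X).functorPushforward F ∈ J (F.obj X)
      rw [h]; exact J.top_mem _
    pullback_stable' := fun X Y S h hS => by
      show ((S.pullback h).functorPushforward F) ∈ J (F.obj Y)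
      have hW : (S.functorPushforward F).pullback (F.map h) ∈ J (F.obj Y) :=
        J.pullback_stable _ hS
      refine J.transitive hW _ ?_
      intro Z f hf
      obtain ⟨C, u, e, hu, hfac⟩ := hf
      obtain ⟨ι, B', g, hcov, hfact⟩ :=
        hF 2 Z (Fin.cons C (Fin.cons Y Fin.elim0))
          (Fin.cons e (Fin.cons f (fun α => α.elim0)))
      refine J.superset_covering ?_ hcov
      rintro W w ⟨W', w', g', ⟨β⟩, rfl⟩
      obtain ⟨k, hk'⟩ := hfact 0 β
      obtain ⟨l, hl'⟩ := hfact 1 β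
      have hk : F.map k = g β ≫ e := by rw [hk']; rfl
      have hl : F.map l = g β ≫ f := by rw [hl']; rfl
      have heq : F.map (l ≫ h) = F.map (k ≫ u) := by
        exact (F.map_comp l h).trans ((congrArg (· ≫ F.map h) hl).trans ((Category.assoc _ _ _).trans
          ((congrArg (g β ≫ ·) hfac).trans ((Category.assoc _ _ _).symm.trans
          ((congrArg (· ≫ F.map u) hk).symm.trans (F.map_comp k u).symm)))))
      have hlh : l ≫ h = k ≫ u := F.map_injective heq
      have hlS : (S.pullback h) l := by
        show S.arrows (l ≫ h)
        rw [hlh]; exact S.downward_closed hu k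
      exact ⟨B' β, l, w', hlS, by rw [Category.assoc, ← hl]; rfl⟩
    transitive' := fun X S hS R hR => by
      show (R.functorPushforward F) ∈ J (F.obj X)
      refine J.transitive hS _ ?_
      intro Z g hg
      obtain ⟨C, u, e, hu, hfac⟩ := hg
      have h1 : ((R.pullback u).functorPushforward F) ∈ J (F.obj C) := hR hu
      have h2 := J.pullback_stable e h1
      refine J.superset_covering ?_ h2
      intro Z' w hw
      obtain ⟨D, v, e', hv, hfac'⟩ := hw
      refine ⟨D, v ≫ u, e', hv, ?_⟩
      rw [hfac, ← Category.assoc, hfac']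
      simp
  }, fun X S => Iff.rfl⟩
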